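/- For |z| < 1, (1/pi^2) * double integral over [0,pi]^2 of dk_1 dk_2 / (1 - (z/2)(cos k_1 + cos k_2)) = (1/pi^2) * double integral over [0,pi]^2 of dk_1 dk_2 / (1 - z cos(k_1) cos(k_2)); i.e., the LGFs of the square lattice and the diagonal (2D fcc) lattice coincide. -/

import Mathlib

open scoped Real
open MeasureTheory Finset intervalIntegral Real

/-- Wallis-type integral `∫₀^π cos^n`. -/
noncomputable def Wint (n : ℕ) : ℝ := ∫ x in (0:ℝ)..π, Real.cos x ^ n

lemma Wint_abs_le (n : ℕ) : |Wint n| ≤ π := by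
  have h := intervalIntegral.norm_integral_le_of_norm_le_const
      (C := 1) (f := fun x => Real.cos x ^ n) (a := (0:ℝ)) (b := π) ?_
  · simpa [Wint, abs_of_nonneg Real.pi_pos.le] using h
  · intro x _
    simpa [abs_pow] using pow_le_one₀ (abs_nonneg (Real.cos x)) (Real.abs_cos_le_one x)

lemma Wint_odd (m : ℕ) : Wint (2 * m + 1) = 0 := by
  have hodd : Odd (2 * m + 1) := ⟨m, by ring⟩
  have h := intervalIntegral.integral_comp_sub_left (a := (0:ℝ)) (b := π)
      (fun x => Real.cos x ^ (2 * m + 1)) π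
  simp only [Real.cos_pi_sub, hodd.neg_pow, sub_zero, sub_self,
    intervalIntegral.integral_neg] at h
  have h2 : -Wint (2 * m + 1) = Wint (2 * m + 1) := h
  linarith

lemma Wint_even (m : ℕ) : Wint (2 * m) = π * ((2 * m).choose m : ℝ) / 4 ^ m := by
  induction m with
  | zero => simp [Wint]
  | succ k ih =>
    have hrec : Wint (2 * (k + 1)) = ((2 * k : ℕ) + 1) / ((2 * k : ℕ) + 2) * Wint (2 * k) := by
      have := integral_cos_pow (a := (0:ℝ)) (b := π) (n := 2 * k)
      simpa [Wint, Real.sin_pi, show 2 * (k + 1) = 2 * k + 2 by ring] using this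
    rw [hrec, ih]
    have hcb := Nat.succ_mul_centralBinom_succ k
    have hc1 : (2 * (k + 1)).choose (k + 1) = Nat.centralBinom (k + 1) :=
      (Nat.centralBinom_eq_two_mul_choose (k + 1)).symm
    have hc2 : (2 * k).choose k = Nat.centralBinom k :=
      (Nat.centralBinom_eq_two_mul_choose k).symm
    rw [hc1, hc2]
    have hcbR : ((k : ℝ) + 1) * (Nat.centralBinom (k + 1) : ℝ)
        = 2 * (2 * k + 1) * (Nat.centralBinom k : ℝ) := by
      exact_mod_cast congrArg (Nat.cast : ℕ → ℝ) hcb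
    have hk1 : ((k : ℝ) + 1) ≠ 0 := by positivity
    have h4 : ((4 : ℝ) ^ k) ≠ 0 := by positivity
    push_cast at hrec ⊢
    field_simp
    linear_combination (-(2:ℝ) * 4 ^ k) * hcbR

lemma choose_id_real (m i : ℕ) (h : i ≤ m) :
    ((2 * m).choose (2 * i) : ℝ) * ((2 * i).choose i : ℝ) * ((2 * (m - i)).choose (m - i) : ℝ)
      = ((2 * m).choose m : ℝ) * ((m.choose i : ℝ)) ^ 2 := by
  rw [Nat.cast_choose ℝ (show 2 * i ≤ 2 * m by omega),
      Nat.cast_choose ℝ (show i ≤ 2 * i by omega),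
      Nat.cast_choose ℝ (show m - i ≤ 2 * (m - i) by omega),
      Nat.cast_choose ℝ (show m ≤ 2 * m by omega),
      Nat.cast_choose ℝ h]
  rw [show 2 * m - 2 * i = 2 * (m - i) by omega, show 2 * i - i = i by omega,
      show 2 * (m - i) - (m - i) = m - i by omega, show 2 * m - m = m by omega]
  have f1 : ((Nat.factorial (2 * m) : ℕ) : ℝ) ≠ 0 := by exact_mod_cast Nat.factorial_ne_zero (2 * m)
  have f2 : ((Nat.factorial (2 * i) : ℕ) : ℝ) ≠ 0 := by exact_mod_cast Nat.factorial_ne_zero (2 * i)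
  have f3 : ((Nat.factorial (2 * (m - i)) : ℕ) : ℝ) ≠ 0 := by exact_mod_cast Nat.factorial_ne_zero (2 * (m - i))
  have f4 : ((Nat.factorial i : ℕ) : ℝ) ≠ 0 := by exact_mod_cast Nat.factorial_ne_zero i
  have f5 : ((Nat.factorial (m - i) : ℕ) : ℝ) ≠ 0 := by exact_mod_cast Nat.factorial_ne_zero (m - i)
  have f6 : ((Nat.factorial m : ℕ) : ℝ) ≠ 0 := by exact_mod_cast Nat.factorial_ne_zero m
  field_simp

lemma vandermonde_sq (m : ℕ) :
    ∑ i ∈ Finset.range (m + 1), (m.choose i) ^ 2 = (2 * m).choose m := by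
  have h := Nat.add_choose_eq m m m
  rw [Finset.Nat.sum_antidiagonal_eq_sum_range_succ_mk] at h
  rw [show 2 * m = m + m by ring, h]
  refine Finset.sum_congr rfl fun i hi => ?_
  have him : i ≤ m := Nat.lt_succ_iff.mp (Finset.mem_range.mp hi)
  rw [Nat.choose_symm him, sq]

lemma sum_even_terms (f : ℕ → ℝ) (hf : ∀ i, f (2 * i + 1) = 0) (m : ℕ) :
    ∑ j ∈ Finset.range (2 * m + 1), f j = ∑ i ∈ Finset.range (m + 1), f (2 * i) := by
  induction m with
  | zero => simp
  | succ k ih =>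
    rw [show 2 * (k + 1) + 1 = (2 * k + 1) + 1 + 1 by ring, Finset.sum_range_succ,
        Finset.sum_range_succ, ih, Finset.sum_range_succ (n := k + 1), hf k]
    rw [show 2 * k + 1 + 1 = 2 * (k + 1) by ring]
    ring

lemma key_identity (n : ℕ) :
    ∑ j ∈ Finset.range (n + 1), Wint j * Wint (n - j) * (n.choose j : ℝ)
      = 2 ^ n * (Wint n) ^ 2 := by
  rcases Nat.even_or_odd n with ⟨m, rfl⟩ | ⟨m, rfl⟩
  · rw [show m + m = 2 * m by ring]
    have hodd : ∀ i, Wint (2 * i + 1) * Wint (2 * m - (2 * i + 1)) * ((2 * m).choose (2 * i + 1) : ℝ) = 0 := by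
      intro i
      rw [Wint_odd]; ring
    rw [sum_even_terms (fun j => Wint j * Wint (2 * m - j) * ((2 * m).choose j : ℝ)) hodd m]
    have hterm : ∀ i ∈ Finset.range (m + 1),
        Wint (2 * i) * Wint (2 * m - 2 * i) * ((2 * m).choose (2 * i) : ℝ)
          = π ^ 2 / 4 ^ m * (((2 * m).choose m : ℝ) * ((m.choose i : ℝ)) ^ 2) := by
      intro i hi
      have him : i ≤ m := Nat.lt_succ_iff.mp (Finset.mem_range.mp hi)
      rw [show 2 * m - 2 * i = 2 * (m - i) by omega, Wint_even, Wint_even,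
          ← choose_id_real m i him]
      have h4 : (4:ℝ) ^ i * 4 ^ (m - i) = 4 ^ m := by
        rw [← pow_add]; congr 1; omega
      have h4i : ((4:ℝ) ^ i) ≠ 0 := by positivity
      have h4mi : ((4:ℝ) ^ (m - i)) ≠ 0 := by positivity
      have h4m : ((4:ℝ) ^ m) ≠ 0 := by positivity
      field_simp
      rw [← h4]
      ring
    rw [Finset.sum_congr rfl hterm, ← Finset.mul_sum]
    have hv : (∑ i ∈ Finset.range (m + 1), ((m.choose i : ℝ)) ^ 2) = ((2 * m).choose m : ℝ) := by
      exact_mod_cast congrArg (Nat.cast : ℕ → ℝ) (vandermonde_sq m)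
    rw [← Finset.mul_sum, hv, Wint_even]
    have h2 : (2:ℝ) ^ (2 * m) = 4 ^ m := by
      rw [pow_mul]; norm_num
    have h4m : ((4:ℝ) ^ m) ≠ 0 := by positivity
    rw [h2]
    field_simp
  · have hW : Wint (2 * m + 1) = 0 := Wint_odd m
    rw [hW]
    rw [show (0:ℝ)^2 = 0 by ring, mul_zero]
    refine Finset.sum_eq_zero fun j hj => ?_
    have hjle : j ≤ 2 * m + 1 := Nat.lt_succ_iff.mp (Finset.mem_range.mp hj)
    rcases Nat.even_or_odd j with ⟨i, rfl⟩ | ⟨i, rfl⟩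
    · have : 2 * m + 1 - (i + i) = 2 * (m - i) + 1 := by omega
      rw [this, Wint_odd]; ring
    · rw [show 2 * i + 1 = 2 * i + 1 by rfl, Wint_odd]; ring

lemma inner_hasSum (z : ℝ) (hz : |z| < 1) (g : ℝ → ℝ) (hgc : Continuous g)
    (hgb : ∀ x, |g x| ≤ 1) :
    HasSum (fun n : ℕ => ∫ k in (0:ℝ)..π, (z * g k) ^ n)
      (∫ k in (0:ℝ)..π, 1 / (1 - z * g k)) := by
  have habs : ∀ t : ℝ, |z * g t| ≤ |z| := by
    intro t
    rw [abs_mul]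
    calc |z| * |g t| ≤ |z| * 1 := mul_le_mul_of_nonneg_left (hgb t) (abs_nonneg z)
      _ = |z| := mul_one _
  apply intervalIntegral.hasSum_integral_of_dominated_convergence
      (bound := fun (n : ℕ) (_ : ℝ) => |z| ^ n)
  · intro n
    exact ((continuous_const.mul hgc).pow n).aestronglyMeasurable
  · intro n
    filter_upwards with t _
    calc ‖(z * g t) ^ n‖ = |z * g t| ^ n := by rw [Real.norm_eq_abs, abs_pow]
      _ ≤ |z| ^ n := pow_le_pow_left₀ (abs_nonneg _) (habs t) n
  · filter_upwards with t _
    exact summable_geometric_of_lt_one (abs_nonneg z) hz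
  · exact intervalIntegrable_const
  · filter_upwards with t _
    have hlt : ‖z * g t‖ < 1 := by
      rw [Real.norm_eq_abs]; exact lt_of_le_of_lt (habs t) hz
    simpa [one_div] using hasSum_geometric_of_norm_lt_one hlt

lemma integral_add_pow (a : ℝ) (n : ℕ) :
    (∫ k in (0:ℝ)..π, (a + Real.cos k) ^ n)
      = ∑ j ∈ Finset.range (n + 1), a ^ j * Wint (n - j) * (n.choose j : ℝ) := by
  have h : ∀ k : ℝ, (a + Real.cos k) ^ n
      = ∑ j ∈ Finset.range (n + 1), a ^ j * Real.cos k ^ (n - j) * (n.choose j : ℝ) :=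
    fun k => add_pow a (Real.cos k) n
  simp_rw [h]
  rw [intervalIntegral.integral_finset_sum]
  · refine Finset.sum_congr rfl fun j _ => ?_
    rw [intervalIntegral.integral_mul_const, intervalIntegral.integral_const_mul]
    simp only [Wint]
  · intro j _
    apply Continuous.intervalIntegrable
    fun_prop

lemma lhs_hasSum (z : ℝ) (hz : |z| < 1) :
    HasSum (fun n : ℕ => (z / 2) ^ n * ∑ j ∈ Finset.range (n + 1),
        Wint j * Wint (n - j) * (n.choose j : ℝ))
      (∫ k₁ in (0:ℝ)..π, ∫ k₂ in (0:ℝ)..π,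
        1 / (1 - (z / 2) * (Real.cos k₁ + Real.cos k₂))) := by
  set F : ℕ → ℝ → ℝ := fun n k₁ => (z / 2) ^ n *
      ∑ j ∈ Finset.range (n + 1), Real.cos k₁ ^ j * Wint (n - j) * (n.choose j : ℝ) with hF
  have hsum2 : Summable fun n : ℕ => π * |z| ^ n :=
    (summable_geometric_of_lt_one (abs_nonneg z) hz).mul_left π
  have hmain : HasSum (fun n => ∫ k₁ in (0:ℝ)..π, F n k₁)
      (∫ k₁ in (0:ℝ)..π, ∫ k₂ in (0:ℝ)..π,
        1 / (1 - (z / 2) * (Real.cos k₁ + Real.cos k₂))) := by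
    apply intervalIntegral.hasSum_integral_of_dominated_convergence
        (bound := fun (n : ℕ) (_ : ℝ) => π * |z| ^ n)
    · intro n
      exact (continuous_const.mul (continuous_finset_sum _ fun j _ =>
        ((Real.continuous_cos.pow j).mul continuous_const).mul
          continuous_const)).aestronglyMeasurable
    · intro n
      filter_upwards with t _
      have h1 : |∑ j ∈ Finset.range (n + 1), Real.cos t ^ j * Wint (n - j) * (n.choose j : ℝ)|
          ≤ π * 2 ^ n := by
        calc |∑ j ∈ Finset.range (n + 1), Real.cos t ^ j * Wint (n - j) * (n.choose j : ℝ)|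
            ≤ ∑ j ∈ Finset.range (n + 1),
              |Real.cos t ^ j * Wint (n - j) * (n.choose j : ℝ)| :=
            Finset.abs_sum_le_sum_abs _ _
          _ ≤ ∑ j ∈ Finset.range (n + 1), π * (n.choose j : ℝ) := by
            refine Finset.sum_le_sum fun j _ => ?_
            rw [abs_mul, abs_mul]
            have hc : |Real.cos t ^ j| ≤ 1 := by
              rw [abs_pow]
              exact pow_le_one₀ (abs_nonneg _) (Real.abs_cos_le_one t)
            have hch : |(n.choose j : ℝ)| = (n.choose j : ℝ) := abs_of_nonneg (by positivity)
            rw [hch]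
            calc |Real.cos t ^ j| * |Wint (n - j)| * (n.choose j : ℝ)
                ≤ 1 * π * (n.choose j : ℝ) := by
                  gcongr
                  exact Wint_abs_le _
              _ = π * (n.choose j : ℝ) := by ring
          _ = π * 2 ^ n := by
            rw [← Finset.mul_sum]
            congr 1
            rw [← Nat.cast_sum, Nat.sum_range_choose]
            push_cast
            ring
      calc ‖F n t‖ = |(z / 2) ^ n| *
            |∑ j ∈ Finset.range (n + 1), Real.cos t ^ j * Wint (n - j) * (n.choose j : ℝ)| := by
            rw [hF]; rw [Real.norm_eq_abs, abs_mul]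
        _ ≤ (|z| / 2) ^ n * (π * 2 ^ n) := by
            rw [abs_pow, abs_div, abs_two]
            exact mul_le_mul_of_nonneg_left h1 (by positivity)
        _ = π * |z| ^ n := by
            rw [div_pow]
            field_simp
    · filter_upwards with t _
      exact hsum2
    · exact intervalIntegrable_const
    · filter_upwards with t _
      have hin := inner_hasSum z hz (fun k => (Real.cos t + Real.cos k) / 2)
        (by fun_prop) (fun x => by
          rw [abs_div, abs_two, div_le_one (by norm_num)]
          calc |Real.cos t + Real.cos x| ≤ |Real.cos t| + |Real.cos x| := abs_add_le _ _
            _ ≤ 1 + 1 := add_le_add (Real.abs_cos_le_one t) (Real.abs_cos_le_one x)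
            _ = 2 := by norm_num)
      have he1 : ∀ x : ℝ, z * ((Real.cos t + Real.cos x) / 2)
          = (z / 2) * (Real.cos t + Real.cos x) := fun x => by ring
      simp only [he1] at hin
      have he2 : ∀ n : ℕ, (∫ k in (0:ℝ)..π, ((z / 2) * (Real.cos t + Real.cos k)) ^ n)
          = F n t := by
        intro n
        simp_rw [mul_pow]
        rw [intervalIntegral.integral_const_mul, integral_add_pow, hF]
      exact (funext he2) ▸ hin
  have heval : ∀ n : ℕ, (∫ k₁ in (0:ℝ)..π, F n k₁)
      = (z / 2) ^ n * ∑ j ∈ Finset.range (n + 1), Wint j * Wint (n - j) * (n.choose j : ℝ) := by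
    intro n
    rw [hF]
    rw [intervalIntegral.integral_const_mul]
    congr 1
    rw [intervalIntegral.integral_finset_sum]
    · refine Finset.sum_congr rfl fun j _ => ?_
      rw [intervalIntegral.integral_mul_const, intervalIntegral.integral_mul_const]
      simp only [Wint]
    · intro j _
      apply Continuous.intervalIntegrable
      fun_prop
  exact (funext heval) ▸ hmain

lemma rhs_hasSum (z : ℝ) (hz : |z| < 1) :
    HasSum (fun n : ℕ => z ^ n * (Wint n) ^ 2)
      (∫ k₁ in (0:ℝ)..π, ∫ k₂ in (0:ℝ)..π,
        1 / (1 - z * Real.cos k₁ * Real.cos k₂)) := by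
  set F : ℕ → ℝ → ℝ := fun n k₁ => z ^ n * Wint n * Real.cos k₁ ^ n with hF
  have hsum2 : Summable fun n : ℕ => π * |z| ^ n :=
    (summable_geometric_of_lt_one (abs_nonneg z) hz).mul_left π
  have hmain : HasSum (fun n => ∫ k₁ in (0:ℝ)..π, F n k₁)
      (∫ k₁ in (0:ℝ)..π, ∫ k₂ in (0:ℝ)..π,
        1 / (1 - z * Real.cos k₁ * Real.cos k₂)) := by
    apply intervalIntegral.hasSum_integral_of_dominated_convergence
        (bound := fun (n : ℕ) (_ : ℝ) => π * |z| ^ n)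
    · intro n
      exact (continuous_const.mul (Real.continuous_cos.pow n)).aestronglyMeasurable
    · intro n
      filter_upwards with t _
      have hc : |Real.cos t ^ n| ≤ 1 := by
        rw [abs_pow]
        exact pow_le_one₀ (abs_nonneg _) (Real.abs_cos_le_one t)
      calc ‖F n t‖ = |z| ^ n * |Wint n| * |Real.cos t ^ n| := by
            rw [hF, Real.norm_eq_abs, abs_mul, abs_mul, abs_pow]
        _ ≤ |z| ^ n * π * 1 := by
            gcongr
            exact Wint_abs_le n
        _ = π * |z| ^ n := by ring
    · filter_upwards with t _
      exact hsum2
    · exact intervalIntegrable_const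
    · filter_upwards with t _
      have hin := inner_hasSum z hz (fun k => Real.cos t * Real.cos k)
        (by fun_prop) (fun x => by
          rw [abs_mul]
          calc |Real.cos t| * |Real.cos x| ≤ 1 * 1 :=
            mul_le_mul (Real.abs_cos_le_one t) (Real.abs_cos_le_one x) (abs_nonneg _) zero_le_one
            _ = 1 := by norm_num)
      have he1 : ∀ x : ℝ, z * (Real.cos t * Real.cos x) = z * Real.cos t * Real.cos x :=
        fun x => by ring
      simp only [he1] at hin
      have he2 : ∀ n : ℕ, (∫ k in (0:ℝ)..π, (z * Real.cos t * Real.cos k) ^ n) = F n t := by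
        intro n
        simp_rw [mul_pow]
        rw [intervalIntegral.integral_const_mul, hF]
        simp only [Wint]
        ring
      exact (funext he2) ▸ hin
  have heval : ∀ n : ℕ, (∫ k₁ in (0:ℝ)..π, F n k₁) = z ^ n * (Wint n) ^ 2 := by
    intro n
    rw [hF, intervalIntegral.integral_const_mul]
    simp only [Wint]
    ring
  exact (funext heval) ▸ hmain

/-- For `|z| < 1`, the lattice Green's functions of the square lattice (structure
function `(cos k₁ + cos k₂)/2`) and of the diagonal (2D fcc) lattice (structure
function `cos k₁ cos k₂`) coincide. -/
theorem lgf_square_eq_lgf_fcc2 (z : ℝ) (hz : |z| < 1) :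
    (1 / π ^ 2) * (∫ k₁ in (0:ℝ)..π, ∫ k₂ in (0:ℝ)..π,
        1 / (1 - (z / 2) * (Real.cos k₁ + Real.cos k₂))) =
    (1 / π ^ 2) * (∫ k₁ in (0:ℝ)..π, ∫ k₂ in (0:ℝ)..π,
        1 / (1 - z * Real.cos k₁ * Real.cos k₂)) := by
  have hL := lhs_hasSum z hz
  have hR := rhs_hasSum z hz
  have he : (fun n : ℕ => (z / 2) ^ n * ∑ j ∈ Finset.range (n + 1),
      Wint j * Wint (n - j) * (n.choose j : ℝ)) = fun n : ℕ => z ^ n * (Wint n) ^ 2 := by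
    funext n
    rw [key_identity, div_pow]
    have h2 : ((2:ℝ) ^ n) ≠ 0 := by positivity
    field_simp
  rw [he] at hL
  rw [hL.unique hR]
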